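/- Let π be a weakly continuous *-representation of the tensor product Banach quasi *-algebra (𝔄 ⊗̂_n 𝔅, 𝔄₀ ⊗ 𝔅₀) with units e_𝔄, e_𝔅. Define π₁(a) := π(a ⊗ e_𝔅) and π₂(b) := π(e_𝔄 ⊗ b). Then π₁ and π₂ are weakly continuous *-representations of (𝔄, 𝔄₀) and (𝔅, 𝔅₀) respectively, and for x ∈ 𝔄₀, y ∈ 𝔅₀, a ∈ 𝔄, b ∈ 𝔅: π(x ⊗ b) = π₁(x) □ π₂(b) = π₂(b) □ π₁(x) and π(a ⊗ y) = π₁(a) □ π₂(y) = π₂(y) □ π₁(a), where □ denotes the weak multiplication in L†(D_π, H_π). -/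

import Mathlib

open scoped TensorProduct
open Filter

/-- Let `π` be a weakly continuous *-representation of the tensor product
Banach quasi *-algebra `(𝔄 ⊗̂ₙ 𝔅, 𝔄₀ ⊗ 𝔅₀)` with units `e_𝔄 = ιA 1`, `e_𝔅 = ιB 1`, acting on
`L†(D, H)` (operators `D →ₗ H`, with the *-representation conditions expressed through matrix
elements, `π(c*) = π(c)†` and `π(c z) = π(c) □ π(z)`). Put `π₁(a) := π(a ⊗ e_𝔅)` and
`π₂(b) := π(e_𝔄 ⊗ b)`. Then `π₁` and `π₂` are weakly continuous *-representations of `(𝔄, 𝔄₀)`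
and `(𝔅, 𝔅₀)` respectively, and `π(x ⊗ b) = π₁(x) □ π₂(b) = π₂(b) □ π₁(x)`,
`π(a ⊗ y) = π₁(a) □ π₂(y) = π₂(y) □ π₁(a)` (as identities of matrix elements, where
`⟪(T □ S)ξ, η⟫ = ⟪Sξ, T† η⟫`). -/
theorem stmt10
    (H : Type*) [NormedAddCommGroup H] [InnerProductSpace ℂ H] [CompleteSpace H]
    (D : Submodule ℂ H) (hD : Dense (D : Set H))
    (A A₀ B B₀ : Type*)
    [NormedAddCommGroup A] [NormedSpace ℂ A] [StarAddMonoid A] [StarModule ℂ A]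
    [NormedAddCommGroup B] [NormedSpace ℂ B] [StarAddMonoid B] [StarModule ℂ B]
    [CompleteSpace A] [CompleteSpace B]
    [Ring A₀] [Algebra ℂ A₀] [StarRing A₀] [StarModule ℂ A₀]
    [Ring B₀] [Algebra ℂ B₀] [StarRing B₀] [StarModule ℂ B₀]
    (ιA : A₀ →ₗ[ℂ] A) (ιB : B₀ →ₗ[ℂ] B)
    (hιAstar : ∀ x : A₀, ιA (star x) = star (ιA x))
    (hιBstar : ∀ y : B₀, ιB (star y) = star (ιB y))
    (lA rA : A₀ →ₗ[ℂ] A →ₗ[ℂ] A) (lB rB : B₀ →ₗ[ℂ] B →ₗ[ℂ] B)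
    (hιAmul : ∀ x y : A₀, lA x (ιA y) = ιA (x * y) ∧ rA y (ιA x) = ιA (x * y))
    (hιBmul : ∀ x y : B₀, lB x (ιB y) = ιB (x * y) ∧ rB y (ιB x) = ιB (x * y))
    (hunitA : ∀ a : A, lA 1 a = a ∧ rA 1 a = a)
    (hunitB : ∀ b : B, lB 1 b = b ∧ rB 1 b = b)
    -- the tensor product quasi *-algebra structure on 𝔄 ⊗ 𝔅 over 𝔄₀ ⊗ 𝔅₀
    (L R : TensorProduct ℂ A₀ B₀ →ₗ[ℂ] TensorProduct ℂ A B →ₗ[ℂ] TensorProduct ℂ A B)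
    (hL : ∀ (x : A₀) (y : B₀) (a : A) (b : B),
      L (x ⊗ₜ[ℂ] y) (a ⊗ₜ[ℂ] b) = lA x a ⊗ₜ[ℂ] lB y b)
    (hR : ∀ (x : A₀) (y : B₀) (a : A) (b : B),
      R (x ⊗ₜ[ℂ] y) (a ⊗ₜ[ℂ] b) = rA x a ⊗ₜ[ℂ] rB y b)
    (S : TensorProduct ℂ A B → TensorProduct ℂ A B)
    (hS : ∀ (a : A) (b : B), S (a ⊗ₜ[ℂ] b) = star a ⊗ₜ[ℂ] star b)
    -- the uniform cross-norm n̄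
    (N : TensorProduct ℂ A B → ℝ)
    (hcross : ∀ (a : A) (b : B), N (a ⊗ₜ[ℂ] b) = ‖a‖ * ‖b‖)
    -- the weakly continuous *-representation π
    (π : TensorProduct ℂ A B →ₗ[ℂ] (D →ₗ[ℂ] H))
    (hπstar : ∀ (c : TensorProduct ℂ A B) (ξ η : D),
      (inner ℂ (π c ξ) (η : H) : ℂ) = inner ℂ (ξ : H) (π (S c) η))
    (hπmult : ∀ (c : TensorProduct ℂ A B) (z : TensorProduct ℂ A₀ B₀) (ξ η : D),
      (inner ℂ (π (R z c) ξ) (η : H) : ℂ)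
        = inner ℂ (π (TensorProduct.map ιA ιB z) ξ) (π (S c) η))
    (hπcont : ∀ (c : ℕ → TensorProduct ℂ A B) (c₀ : TensorProduct ℂ A B),
      Tendsto (fun n => N (c n - c₀)) atTop (nhds 0) →
      ∀ ξ η : D, Tendsto (fun n => (inner ℂ (π (c n) ξ) (η : H) : ℂ)) atTop
        (nhds (inner ℂ (π c₀ ξ) (η : H)))) :
    -- π₁ := π(· ⊗ e_𝔅) is weakly continuous
    (∀ (a : ℕ → A) (a₀ : A),
      Tendsto (fun n => ‖a n - a₀‖) atTop (nhds 0) →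
      ∀ ξ η : D, Tendsto (fun n => (inner ℂ (π (a n ⊗ₜ[ℂ] ιB 1) ξ) (η : H) : ℂ)) atTop
        (nhds (inner ℂ (π (a₀ ⊗ₜ[ℂ] ιB 1) ξ) (η : H)))) ∧
    -- π₂ := π(e_𝔄 ⊗ ·) is weakly continuous
    (∀ (b : ℕ → B) (b₀ : B),
      Tendsto (fun n => ‖b n - b₀‖) atTop (nhds 0) →
      ∀ ξ η : D, Tendsto (fun n => (inner ℂ (π (ιA 1 ⊗ₜ[ℂ] b n) ξ) (η : H) : ℂ)) atTop
        (nhds (inner ℂ (π (ιA 1 ⊗ₜ[ℂ] b₀) ξ) (η : H)))) ∧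
    -- π₁ is a *-representation of (𝔄, 𝔄₀)
    (∀ (a : A) (ξ η : D),
      (inner ℂ (π (a ⊗ₜ[ℂ] ιB 1) ξ) (η : H) : ℂ) = inner ℂ (ξ : H) (π (star a ⊗ₜ[ℂ] ιB 1) η)) ∧
    (∀ (a : A) (x : A₀) (ξ η : D),
      (inner ℂ (π (rA x a ⊗ₜ[ℂ] ιB 1) ξ) (η : H) : ℂ)
        = inner ℂ (π (ιA x ⊗ₜ[ℂ] ιB 1) ξ) (π (star a ⊗ₜ[ℂ] ιB 1) η)) ∧
    -- π₂ is a *-representation of (𝔅, 𝔅₀)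
    (∀ (b : B) (ξ η : D),
      (inner ℂ (π (ιA 1 ⊗ₜ[ℂ] b) ξ) (η : H) : ℂ) = inner ℂ (ξ : H) (π (ιA 1 ⊗ₜ[ℂ] star b) η)) ∧
    (∀ (b : B) (y : B₀) (ξ η : D),
      (inner ℂ (π (ιA 1 ⊗ₜ[ℂ] rB y b) ξ) (η : H) : ℂ)
        = inner ℂ (π (ιA 1 ⊗ₜ[ℂ] ιB y) ξ) (π (ιA 1 ⊗ₜ[ℂ] star b) η)) ∧
    -- π(x ⊗ b) = π₁(x) □ π₂(b) = π₂(b) □ π₁(x)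
    (∀ (x : A₀) (b : B) (ξ η : D),
      (inner ℂ (π (ιA x ⊗ₜ[ℂ] b) ξ) (η : H) : ℂ)
          = inner ℂ (π (ιA 1 ⊗ₜ[ℂ] b) ξ) (π (star (ιA x) ⊗ₜ[ℂ] ιB 1) η) ∧
      (inner ℂ (π (ιA x ⊗ₜ[ℂ] b) ξ) (η : H) : ℂ)
          = inner ℂ (π (ιA x ⊗ₜ[ℂ] ιB 1) ξ) (π (ιA 1 ⊗ₜ[ℂ] star b) η)) ∧
    -- π(a ⊗ y) = π₁(a) □ π₂(y) = π₂(y) □ π₁(a)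
    (∀ (a : A) (y : B₀) (ξ η : D),
      (inner ℂ (π (a ⊗ₜ[ℂ] ιB y) ξ) (η : H) : ℂ)
          = inner ℂ (π (ιA 1 ⊗ₜ[ℂ] ιB y) ξ) (π (star a ⊗ₜ[ℂ] ιB 1) η) ∧
      (inner ℂ (π (a ⊗ₜ[ℂ] ιB y) ξ) (η : H) : ℂ)
          = inner ℂ (π (a ⊗ₜ[ℂ] ιB 1) ξ) (π (ιA 1 ⊗ₜ[ℂ] star (ιB y)) η)) := by
  have hA1 : star (ιA 1) = ιA 1 := by rw [← hιAstar, star_one]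
  have hB1 : star (ιB 1) = ιB 1 := by rw [← hιBstar, star_one]
  -- conjugated version of hπmult
  have key : ∀ (c : TensorProduct ℂ A B) (z : TensorProduct ℂ A₀ B₀) (ξ η : D),
      (inner ℂ (ξ : H) (π (R z c) η) : ℂ)
        = inner ℂ (π (S c) ξ) (π (TensorProduct.map ιA ιB z) η) := by
    intro c z ξ η
    rw [← inner_conj_symm, hπmult c z η ξ, inner_conj_symm]
  refine ⟨?_, ?_, ?_, ?_, ?_, ?_, ?_, ?_⟩
  · -- π₁ weakly continuous
    intro a a₀ h ξ η
    refine hπcont _ _ ?_ ξ η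
    have h2 : Tendsto (fun n => ‖a n - a₀‖ * ‖ιB 1‖) atTop (nhds 0) := by
      simpa using h.mul_const ‖ιB 1‖
    simpa only [← TensorProduct.sub_tmul, hcross] using h2
  · -- π₂ weakly continuous
    intro b b₀ h ξ η
    refine hπcont _ _ ?_ ξ η
    have h2 : Tendsto (fun n => ‖ιA 1‖ * ‖b n - b₀‖) atTop (nhds 0) := by
      simpa using h.const_mul ‖ιA 1‖
    simpa only [← TensorProduct.tmul_sub, hcross] using h2
  · -- π₁ star
    intro a ξ η
    rw [hπstar, hS, hB1]
  · -- π₁ mult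
    intro a x ξ η
    have hR1 : R (x ⊗ₜ[ℂ] (1 : B₀)) (a ⊗ₜ[ℂ] ιB 1) = rA x a ⊗ₜ[ℂ] ιB 1 := by
      rw [hR, (hunitB (ιB 1)).2]
    have := hπmult (a ⊗ₜ[ℂ] ιB 1) (x ⊗ₜ[ℂ] (1 : B₀)) ξ η
    rw [hR1, hS, hB1, TensorProduct.map_tmul] at this
    exact this
  · -- π₂ star
    intro b ξ η
    rw [hπstar, hS, hA1]
  · -- π₂ mult
    intro b y ξ η
    have hR1 : R ((1 : A₀) ⊗ₜ[ℂ] y) (ιA 1 ⊗ₜ[ℂ] b) = ιA 1 ⊗ₜ[ℂ] rB y b := by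
      rw [hR, (hunitA (ιA 1)).2]
    have := hπmult (ιA 1 ⊗ₜ[ℂ] b) ((1 : A₀) ⊗ₜ[ℂ] y) ξ η
    rw [hR1, hS, hA1, TensorProduct.map_tmul] at this
    exact this
  · -- π(x ⊗ b)
    intro x b ξ η
    constructor
    · rw [hπstar, hS, ← hιAstar]
      have hR1 : R (star x ⊗ₜ[ℂ] (1 : B₀)) (ιA 1 ⊗ₜ[ℂ] star b)
          = ιA (star x) ⊗ₜ[ℂ] star b := by
        rw [hR, (hιAmul 1 (star x)).2, one_mul, (hunitB (star b)).2]
      have := key (ιA 1 ⊗ₜ[ℂ] star b) (star x ⊗ₜ[ℂ] (1 : B₀)) ξ η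
      rw [hR1, hS, hA1, star_star, TensorProduct.map_tmul] at this
      exact this
    · have hR1 : R (x ⊗ₜ[ℂ] (1 : B₀)) (ιA 1 ⊗ₜ[ℂ] b) = ιA x ⊗ₜ[ℂ] b := by
        rw [hR, (hιAmul 1 x).2, one_mul, (hunitB b).2]
      have := hπmult (ιA 1 ⊗ₜ[ℂ] b) (x ⊗ₜ[ℂ] (1 : B₀)) ξ η
      rw [hR1, hS, hA1, TensorProduct.map_tmul] at this
      exact this
  · -- π(a ⊗ y)
    intro a y ξ η
    constructor
    · have hR1 : R ((1 : A₀) ⊗ₜ[ℂ] y) (a ⊗ₜ[ℂ] ιB 1) = a ⊗ₜ[ℂ] ιB y := by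
        rw [hR, (hunitA a).2, (hιBmul 1 y).2, one_mul]
      have := hπmult (a ⊗ₜ[ℂ] ιB 1) ((1 : A₀) ⊗ₜ[ℂ] y) ξ η
      rw [hR1, hS, hB1, TensorProduct.map_tmul] at this
      exact this
    · rw [hπstar, hS, ← hιBstar]
      have hR1 : R ((1 : A₀) ⊗ₜ[ℂ] star y) (star a ⊗ₜ[ℂ] ιB 1)
          = star a ⊗ₜ[ℂ] ιB (star y) := by
        rw [hR, (hunitA (star a)).2, (hιBmul 1 (star y)).2, one_mul]
      have := key (star a ⊗ₜ[ℂ] ιB 1) ((1 : A₀) ⊗ₜ[ℂ] star y) ξ η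
      rw [hR1, hS, hB1, star_star, TensorProduct.map_tmul] at this
      exact this
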